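/- Let N be a function assigning a rational number N(a,b) to every pair of integers a ≥ 1, b ≥ 1. Suppose that N(1,b) = 1 for all b ≥ 1, and that (a+1)·a·N(a+1,b) = (b+1)·b·N(a,b+1) for all a ≥ 1 and b ≥ 1. Then N(a,b) = (a+b−1)!·(a+b−2)! / (a!·(a−1)!·b!·(b−1)!) for all a ≥ 1 and b ≥ 1. -/

import Mathlib

theorem growth_determines_Narayana (N : ℕ → ℕ → ℚ)
    (hbase : ∀ b : ℕ, 1 ≤ b → N 1 b = 1)
    (hrec : ∀ a b : ℕ, 1 ≤ a → 1 ≤ b →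
      ((a : ℚ) + 1) * (a : ℚ) * N (a + 1) b = ((b : ℚ) + 1) * (b : ℚ) * N a (b + 1)) :
    ∀ a b : ℕ, 1 ≤ a → 1 ≤ b →
      N a b = (Nat.factorial (a + b - 1) * Nat.factorial (a + b - 2) : ℚ) /
        (Nat.factorial a * Nat.factorial (a - 1) * Nat.factorial b *
          Nat.factorial (b - 1) : ℚ) := by
  intro a
  induction a with
  | zero => intro b ha hb; omega
  | succ a ih =>
    intro b ha hb
    rcases Nat.eq_zero_or_pos a with rfl | hpos
    · -- base case a+1 = 1
      rw [hbase b hb]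
      obtain ⟨b', rfl⟩ : ∃ b', b = b' + 1 := ⟨b - 1, by omega⟩
      have e : 1 + (b' + 1) - 2 = b' := by omega
      simp [e, Nat.factorial_succ]
      field_simp
    · obtain ⟨a', rfl⟩ : ∃ a', a = a' + 1 := ⟨a - 1, by omega⟩
      obtain ⟨b', rfl⟩ : ∃ b', b = b' + 1 := ⟨b - 1, by omega⟩
      have key := hrec (a' + 1) (b' + 1) (by omega) (by omega)
      rw [ih (b' + 2) (by omega) (by omega)] at key
      have ha0 : ((a' : ℚ) + 1 + 1) * ((a' : ℚ) + 1) ≠ 0 := by positivity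
      have hN : N (a' + 1 + 1) (b' + 1) =
          (((b' : ℚ) + 1 + 1) * ((b' : ℚ) + 1) *
            ((Nat.factorial (a' + 1 + (b' + 2) - 1) * Nat.factorial (a' + 1 + (b' + 2) - 2) : ℚ) /
              (Nat.factorial (a' + 1) * Nat.factorial (a' + 1 - 1) * Nat.factorial (b' + 2) *
                Nat.factorial (b' + 2 - 1) : ℚ))) / (((a' : ℚ) + 1 + 1) * ((a' : ℚ) + 1)) := by
        field_simp at key ⊢
        push_cast at key ⊢
        linarith [key]
      rw [hN]
      have e1 : a' + 1 + (b' + 2) - 1 = a' + b' + 2 := by omega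
      have e2 : a' + 1 + (b' + 2) - 2 = a' + b' + 1 := by omega
      have e3 : a' + 1 + 1 + (b' + 1) - 1 = a' + b' + 2 := by omega
      have e4 : a' + 1 + 1 + (b' + 1) - 2 = a' + b' + 1 := by omega
      rw [e1, e2, e3, e4]
      simp only [Nat.add_sub_cancel]
      have hf : ∀ n : ℕ, ((Nat.factorial n : ℚ)) ≠ 0 := fun n => by
        exact_mod_cast Nat.factorial_ne_zero n
      have fa : ((Nat.factorial (a' + 1 + 1) : ℚ)) =
          ((a' : ℚ) + 2) * ((a' : ℚ) + 1) * Nat.factorial a' := by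
        push_cast [Nat.factorial_succ]; ring
      have fb : ((Nat.factorial (b' + 2) : ℚ)) =
          ((b' : ℚ) + 2) * ((b' : ℚ) + 1) * Nat.factorial b' := by
        push_cast [Nat.factorial_succ]; ring
      rw [fa, fb]
      rw [show b' + 2 - 1 = b' + 1 by omega]
      field_simp
      ring
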